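/- Let R be a finite (not necessarily unital, not necessarily commutative) ring and S a subring of R. Then Pr(S, R) ≥ (1/|K(S, R)|) · (1 + (|K(S, R)| − 1)/|S : Z(S, R)|). In particular, if Z(S, R) ≠ S then Pr(S, R) > 1/|K(S, R)|. -/

import Mathlib

open scoped Pointwise

/-- The probability that a randomly chosen pair, one element from `S` and one from `T`,
commutes (multiplicatively). For a subring `S` of a finite ring `R` this gives
`Pr(S, R) = relCommProb R S Set.univ`, `Pr(R) = relCommProb R Set.univ Set.univ`, etc. -/
noncomputable def relCommProb (R : Type*) [NonUnitalRing R] (S T : Set R) : ℚ :=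
  (Nat.card {p : S × T // (p.1 : R) * (p.2 : R) = (p.2 : R) * (p.1 : R)} : ℚ) /
    ((Nat.card S : ℚ) * (Nat.card T : ℚ))

/-- `C_S(r)`: the centralizer of `r` in the subring `S`, as an additive subgroup of `R`.
Taking `S = ⊤` gives `C_R(r)`. -/
def centIn {R : Type*} [NonUnitalRing R] (S : NonUnitalSubring R) (r : R) : AddSubgroup R where
  carrier := {x | x ∈ S ∧ x * r = r * x}
  zero_mem' := ⟨S.zero_mem, by rw [zero_mul, mul_zero]⟩
  add_mem' := by
    rintro a b ⟨ha, ha'⟩ ⟨hb, hb'⟩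
    exact ⟨S.add_mem ha hb, by rw [add_mul, mul_add, ha', hb']⟩
  neg_mem' := by
    rintro a ⟨ha, ha'⟩
    exact ⟨S.neg_mem ha, by rw [neg_mul, mul_neg, ha']⟩

/-- `Z(S, R)`: the elements of the subring `S` commuting with every element of `R`,
as an additive subgroup of `R`.  Taking `S = ⊤` gives the center `Z(R)`. -/
def zCenter {R : Type*} [NonUnitalRing R] (S : NonUnitalSubring R) : AddSubgroup R where
  carrier := {x | x ∈ S ∧ ∀ r : R, x * r = r * x}
  zero_mem' := ⟨S.zero_mem, fun r => by rw [zero_mul, mul_zero]⟩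
  add_mem' := by
    rintro a b ⟨ha, ha'⟩ ⟨hb, hb'⟩
    exact ⟨S.add_mem ha hb, fun r => by rw [add_mul, mul_add, ha' r, hb' r]⟩
  neg_mem' := by
    rintro a ⟨ha, ha'⟩
    exact ⟨S.neg_mem ha, fun r => by rw [neg_mul, mul_neg, ha' r]⟩

/-- `K(S, R)`: the set of additive commutators `s*r - r*s` with `s ∈ S`, `r ∈ R`. -/
def kSet {R : Type*} [NonUnitalRing R] (S : NonUnitalSubring R) : Set R :=
  {x | ∃ s ∈ S, ∃ r : R, x = s * r - r * s}

/-- `[S, R]`: the additive subgroup of `(R, +)` generated by `K(S, R)`. -/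
def commSub {R : Type*} [NonUnitalRing R] (S : NonUnitalSubring R) : AddSubgroup R :=
  AddSubgroup.closure (kSet S)

/-- `[x, R]`: the additive subgroup of all commutators `x*y - y*x`, `y ∈ R`. -/
def elemComm {R : Type*} [NonUnitalRing R] (x : R) : AddSubgroup R where
  carrier := {z | ∃ y : R, z = x * y - y * x}
  zero_mem' := ⟨0, by simp⟩
  add_mem' := by
    rintro a b ⟨y, rfl⟩ ⟨z, rfl⟩
    exact ⟨y + z, by rw [mul_add, add_mul]; abel⟩
  neg_mem' := by
    rintro a ⟨y, rfl⟩
    exact ⟨-y, by rw [mul_neg, neg_mul]; abel⟩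
/-- The commutator map `r ↦ s*r - r*s` as an `AddMonoidHom`. -/
def RCP.commHom {R : Type*} [NonUnitalRing R] (s : R) : R →+ R where
  toFun r := s * r - r * s
  map_zero' := by simp
  map_add' a b := by rw [mul_add, add_mul]; abel

lemma RCP.commHom_range {R : Type*} [NonUnitalRing R] (s : R) :
    (RCP.commHom s).range = elemComm s := by
  ext z
  constructor
  · rintro ⟨y, rfl⟩; exact ⟨y, rfl⟩
  · rintro ⟨y, rfl⟩; exact ⟨y, rfl⟩

lemma RCP.card_cent_mul {R : Type*} [NonUnitalRing R] [Finite R] (s : R) :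
    Nat.card {r : R // s * r = r * s} * Nat.card (elemComm s) = Nat.card R := by
  have h1 : Nat.card R = Nat.card (R ⧸ (RCP.commHom s).ker) * Nat.card (RCP.commHom s).ker :=
    AddSubgroup.card_eq_card_quotient_mul_card_addSubgroup _
  have h2 : Nat.card (R ⧸ (RCP.commHom s).ker) = Nat.card (elemComm s) := by
    rw [Nat.card_congr (QuotientAddGroup.quotientKerEquivRange (RCP.commHom s)).toEquiv,
      RCP.commHom_range]
  have h3 : Nat.card {r : R // s * r = r * s} = Nat.card (RCP.commHom s).ker := by
    apply Nat.card_congr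
    apply Equiv.subtypeEquivRight
    intro r
    simp [RCP.commHom, AddMonoidHom.mem_ker, sub_eq_zero, eq_comm]
  rw [h3, h1, h2, mul_comm]

lemma RCP.nat_card_sigma {ι : Type*} [Fintype ι] (f : ι → Type*) [∀ i, Finite (f i)] :
    Nat.card (Σ i, f i) = ∑ i, Nat.card (f i) := by
  letI : ∀ i, Fintype (f i) := fun i => Fintype.ofFinite (f i)
  simp [Nat.card_eq_fintype_card, Fintype.card_sigma]

/-- `Pr(S, R) ≥ (1/|K(S, R)|)(1 + (|K(S, R)| − 1)/|S : Z(S, R)|)`; in particular, if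
`Z(S, R) ≠ S` then `Pr(S, R) > 1/|K(S, R)|`. -/
theorem relCommProb_ge_kSet {R : Type*} [NonUnitalRing R] [Fintype R]
    (S : NonUnitalSubring R) :
    relCommProb R (S : Set R) Set.univ ≥
      (1 / (Nat.card (kSet S) : ℚ)) *
        (1 + ((Nat.card (kSet S) : ℚ) - 1) /
          (((zCenter S).addSubgroupOf S.toAddSubgroup).index : ℚ)) ∧
    (((zCenter S : AddSubgroup R) : Set R) ≠ (S : Set R) →
      relCommProb R (S : Set R) Set.univ > 1 / (Nat.card (kSet S) : ℚ)) := by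
  classical
  letI : Fintype ↥(S : Set R) := Fintype.ofFinite _
  set N := Nat.card {p : ↥(S : Set R) × ↥(Set.univ : Set R) //
    (p.1 : R) * (p.2 : R) = (p.2 : R) * (p.1 : R)} with hN
  set a := Nat.card ↥(S : Set R) with ha
  set m := Nat.card R with hm
  set k := Nat.card (kSet S) with hk
  set z := Nat.card (zCenter S) with hz
  set n := ((zCenter S).addSubgroupOf S.toAddSubgroup).index with hn
  -- counting: N = sum of centralizer sizes
  have hcount : N = ∑ s : ↥(S : Set R), Nat.card {r : R // (s : R) * r = r * (s : R)} := by
    rw [hN, Nat.card_congr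
      (⟨fun p => ⟨p.1.1, ⟨p.1.2.1, p.2⟩⟩, fun q => ⟨(q.1, ⟨q.2.1, Set.mem_univ _⟩), q.2.2⟩,
        fun p => rfl, fun q => rfl⟩ :
        {p : ↥(S : Set R) × ↥(Set.univ : Set R) //
          (p.1 : R) * (p.2 : R) = (p.2 : R) * (p.1 : R)} ≃
        Σ s : ↥(S : Set R), {r : R // (s : R) * r = r * (s : R)})]
    exact RCP.nat_card_sigma _
  -- per-element bounds
  have hcent_Z : ∀ s : ↥(S : Set R), (s : R) ∈ zCenter S →
      Nat.card {r : R // (s : R) * r = r * (s : R)} = m := by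
    intro s hs
    exact Nat.card_congr (Equiv.subtypeUnivEquiv hs.2)
  have hcent_ge : ∀ s : ↥(S : Set R),
      m ≤ Nat.card {r : R // (s : R) * r = r * (s : R)} * k := by
    intro s
    have hsub : ((elemComm (s : R) : AddSubgroup R) : Set R) ⊆ kSet S := by
      rintro x ⟨y, rfl⟩
      exact ⟨s, s.2, y, rfl⟩
    have hle : Nat.card (elemComm (s : R)) ≤ k :=
      Nat.card_le_card_of_injective (Set.inclusion hsub) (Set.inclusion_injective hsub)
    calc m = Nat.card {r : R // (s : R) * r = r * (s : R)} * Nat.card (elemComm (s : R)) :=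
          (RCP.card_cent_mul _).symm
      _ ≤ _ := Nat.mul_le_mul_left _ hle
  -- count of central elements
  have hzcount : (Finset.univ.filter (fun s : ↥(S : Set R) => (s : R) ∈ zCenter S)).card = z := by
    rw [hz]
    calc (Finset.univ.filter (fun s : ↥(S : Set R) => (s : R) ∈ zCenter S)).card
        = Fintype.card {s : ↥(S : Set R) // (s : R) ∈ zCenter S} :=
          (Fintype.card_subtype _).symm
      _ = Nat.card {s : ↥(S : Set R) // (s : R) ∈ zCenter S} := Nat.card_eq_fintype_card.symm
      _ = Nat.card ↥(zCenter S) := Nat.card_congr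
          ⟨fun x => ⟨x.1.1, x.2⟩, fun y => ⟨⟨y.1, y.2.1⟩, y.2⟩, fun x => rfl, fun y => rfl⟩
  -- key natural-number inequality: N*k + z*m ≥ a*m + z*(m*k)
  have hkey : a * m + z * (m * k) ≤ N * k + z * m := by
    have hterm : ∀ s : ↥(S : Set R),
        m + (if (s : R) ∈ zCenter S then m * k else 0) ≤
          Nat.card {r : R // (s : R) * r = r * (s : R)} * k +
            (if (s : R) ∈ zCenter S then m else 0) := by
      intro s
      by_cases hs : (s : R) ∈ zCenter S
      · simp only [hs, if_pos]
        rw [hcent_Z s hs]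
        omega
      · simp only [hs, if_neg, not_false_iff, add_zero]
        exact hcent_ge s
    have hsum := Finset.sum_le_sum (s := (Finset.univ : Finset ↥(S : Set R))) (fun s _ => hterm s)
    rw [Finset.sum_add_distrib, Finset.sum_add_distrib, ← Finset.sum_filter,
      ← Finset.sum_filter, Finset.sum_const, Finset.sum_const, Finset.sum_const,
      hzcount, Finset.card_univ, smul_eq_mul, smul_eq_mul, smul_eq_mul] at hsum
    calc a * m + z * (m * k)
        = Fintype.card ↥(S : Set R) • m + (m * k) * z := by
          rw [ha, Nat.card_eq_fintype_card, smul_eq_mul]; ring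
      _ ≤ (∑ s : ↥(S : Set R), Nat.card {r : R // (s : R) * r = r * (s : R)} * k) + m * z := by
          rw [smul_eq_mul, mul_comm (m * k) z, mul_comm m z]; exact hsum
      _ = N * k + z * m := by rw [hcount, Finset.sum_mul, mul_comm m z]
  -- index relation: n * z = a
  have hindex : n * z = a := by
    have hle : zCenter S ≤ S.toAddSubgroup := fun x hx => hx.1
    have h1 : Nat.card ((zCenter S).addSubgroupOf S.toAddSubgroup) = z :=
      Nat.card_congr (AddSubgroup.addSubgroupOfEquivOfLe hle).toEquiv
    have h2 := ((zCenter S).addSubgroupOf S.toAddSubgroup).index_mul_card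
    rw [h1] at h2
    rw [hn, h2, ha]
    exact Nat.card_congr (Equiv.subtypeEquivRight fun x => Iff.rfl)
  -- positivity
  have hm0 : 0 < m := Nat.card_pos
  have ha0 : 0 < a := Nat.card_pos
  have hz0 : 0 < z := Nat.card_pos
  have hk0 : 0 < k := by
    have : Nonempty ↥(kSet S) := ⟨⟨0, 0, S.zero_mem, 0, by simp⟩⟩
    exact Nat.card_pos
  have hn0 : 0 < n := by
    by_contra h
    push_neg at h
    interval_cases n
    omega
  -- rational versions
  have hQkey : ((a : ℚ) * m + z * (m * k)) ≤ (N : ℚ) * k + z * m := by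
    exact_mod_cast hkey
  have hQindex : (n : ℚ) * z = a := by exact_mod_cast hindex
  have hQm : (0 : ℚ) < m := by exact_mod_cast hm0
  have hQa : (0 : ℚ) < a := by exact_mod_cast ha0
  have hQz : (0 : ℚ) < z := by exact_mod_cast hz0
  have hQk : (0 : ℚ) < k := by exact_mod_cast hk0
  have hQn : (0 : ℚ) < n := by exact_mod_cast hn0
  -- unfold relCommProb
  have hprob : relCommProb R (S : Set R) Set.univ = (N : ℚ) / ((a : ℚ) * m) := by
    rw [relCommProb,
      show (Nat.card ↥(Set.univ : Set R)) = m from Nat.card_congr (Equiv.Set.univ R)]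
  have main : relCommProb R (S : Set R) Set.univ ≥
      (1 / (k : ℚ)) * (1 + ((k : ℚ) - 1) / (n : ℚ)) := by
    rw [hprob, ge_iff_le, ← sub_nonneg]
    have hexp : (N : ℚ) / ((a : ℚ) * m) - (1 / (k : ℚ)) * (1 + ((k : ℚ) - 1) / (n : ℚ))
        = ((N : ℚ) * k * n - (a * m * n + a * m * k - a * m)) / ((a : ℚ) * m * k * n) := by
      field_simp
      ring
    rw [hexp]
    apply div_nonneg _ (by positivity)
    rw [← hQindex] at hQkey ⊢
    nlinarith [mul_le_mul_of_nonneg_right hQkey (le_of_lt hQn)]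
  refine ⟨main, fun hne => ?_⟩
  -- second part
  have hk2 : 2 ≤ k := by
    have hsub : ((zCenter S : AddSubgroup R) : Set R) ⊆ (S : Set R) := fun x hx => hx.1
    obtain ⟨x, hxS, hxZ⟩ := Set.exists_of_ssubset (hsub.ssubset_of_ne hne)
    have : ¬ ∀ r : R, x * r = r * x := fun h => hxZ ⟨hxS, h⟩
    push_neg at this
    obtain ⟨r, hr⟩ := this
    rw [hk, Nat.card_coe_set_eq]
    have h2 : 1 < (kSet S).ncard := (Set.one_lt_ncard (Set.toFinite _)).mpr
      ⟨x * r - r * x, ⟨x, hxS, r, rfl⟩, 0, ⟨0, S.zero_mem, 0, by simp⟩,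
        sub_ne_zero.mpr hr⟩
    omega
  have hQk1 : (1 : ℚ) < k := by exact_mod_cast hk2
  calc 1 / (k : ℚ) = 1 / (k : ℚ) * 1 := (mul_one _).symm
    _ < (1 / (k : ℚ)) * (1 + ((k : ℚ) - 1) / (n : ℚ)) := by
        apply mul_lt_mul_of_pos_left _ (by positivity)
        have : (0 : ℚ) < ((k : ℚ) - 1) / n := div_pos (by linarith) hQn
        linarith
    _ ≤ relCommProb R (S : Set R) Set.univ := main
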